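/- Flat exit lemma: Let 0 < δ < 1/100, let B ⊂ H be a closed ball and L a horizontal line. Suppose p_1, ..., p_N ∈ H satisfy: p_1 is the center of B; d(p_1,p_N) > rad(B); d(p_i,p_{i+1}) < δ·diam(B) for each i; and sup over points z of the chain lying in B of d(z,L) ≤ diam(B)/100. Then there exist indices i, j with p_i, p_j ∈ B and |P_L(p_i) - P_L(p_j)| > diam(B)/4, where P_L is the projection onto L (composition of the perpendicular horizontal projection p ↦ p_L followed by vertical translation into L, viewed as a point of R ≅ L). -/
import Mathlib


/-- The Heisenberg group as `ℝ × ℝ × ℝ`. -/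
abbrev H : Type := ℝ × ℝ × ℝ

/-- Heisenberg group multiplication. -/
def Hmul (a b : H) : H :=
  (a.1 + b.1, a.2.1 + b.2.1, a.2.2 + b.2.2 + 2 * (a.1 * b.2.1 - b.1 * a.2.1))

/-- Heisenberg group inverse. -/
def Hinv (a : H) : H := (-a.1, -a.2.1, -a.2.2)

/-- The Koranyi norm. -/
noncomputable def KN (a : H) : ℝ :=
  ((a.1 ^ 2 + a.2.1 ^ 2) ^ 2 + a.2.2 ^ 2) ^ ((1 : ℝ) / 4)

/-- The Koranyi distance. -/
noncomputable def Hd (a b : H) : ℝ := KN (Hmul (Hinv a) b)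

/-- Distance from a point to a set. -/
noncomputable def distSet (p : H) (L : Set H) : ℝ := sInf {r : ℝ | ∃ q ∈ L, r = Hd p q}

/-- The x-axis, a horizontal line. -/
def xAxis : Set H := {q : H | ∃ t : ℝ, q = (t, 0, 0)}

/-- A general horizontal line through `g` with horizontal direction `v`. -/
def horizLine (g : H) (v : ℝ × ℝ) : Set H :=
  {q : H | ∃ t : ℝ, q = Hmul g (t * v.1, t * v.2, 0)}

/-- The non-horizontality `NH(g) = N(g⁻¹ · π̃(g))`. -/
noncomputable def NH (g : H) : ℝ := KN (Hmul (Hinv g) (g.1, g.2.1, 0))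

/-- The real coordinate of the projection of p onto the horizontal line through g
with horizontal direction v, under the linear isometric identification of the
line with the reals. -/
noncomputable def PL (g : H) (v : ℝ × ℝ) (p : H) : ℝ :=
  ((p.1 - g.1) * v.1 + (p.2.1 - g.2.1) * v.2) / Real.sqrt (v.1 ^ 2 + v.2 ^ 2)

/- ## Auxiliary lemmas -/

lemma KN_nonneg' (a : H) : 0 ≤ KN a := Real.rpow_nonneg (by positivity) _

lemma KN_pow4 (a : H) : (KN a) ^ 4 = (a.1 ^ 2 + a.2.1 ^ 2) ^ 2 + a.2.2 ^ 2 := by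
  have h : (0:ℝ) ≤ (a.1 ^ 2 + a.2.1 ^ 2) ^ 2 + a.2.2 ^ 2 := by positivity
  rw [KN, ← Real.rpow_natCast (_ ^ ((1:ℝ)/4)) 4, ← Real.rpow_mul h]
  norm_num

lemma abs_le_of_sq (x y : ℝ) (hy : 0 ≤ y) (h : x ^ 2 ≤ y ^ 2) : |x| ≤ y := by
  rw [← Real.sqrt_sq hy, ← Real.sqrt_sq_eq_abs]
  exact Real.sqrt_le_sqrt h

lemma KN_horiz_sq (a : H) : a.1 ^ 2 + a.2.1 ^ 2 ≤ (KN a) ^ 2 := by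
  have h4 := KN_pow4 a
  have h0 := KN_nonneg' a
  nlinarith [sq_nonneg (a.2.2), sq_nonneg ((KN a)^2 - (a.1^2 + a.2.1^2)),
    sq_nonneg ((KN a)^2 + (a.1^2 + a.2.1^2)), sq_nonneg (a.1), sq_nonneg (a.2.1)]

lemma KN_vert_abs (a : H) : |a.2.2| ≤ (KN a) ^ 2 := by
  have h4 := KN_pow4 a
  have h0 := KN_nonneg' a
  refine abs_le_of_sq _ _ (by positivity) ?_
  nlinarith [sq_nonneg (a.1^2 + a.2.1^2)]

lemma dot_bound (u1 u2 w1 w2 U W : ℝ) (hu : u1^2+u2^2 ≤ U^2) (hw : w1^2+w2^2 ≤ W^2)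
    (hU : 0 ≤ U) (hW : 0 ≤ W) : |u1*w1+u2*w2| ≤ U*W := by
  refine abs_le_of_sq _ _ (by positivity) ?_
  have hid : (u1*w1+u2*w2)^2 + (u1*w2-w1*u2)^2 = (u1^2+u2^2)*(w1^2+w2^2) := by ring
  have hm : (u1^2+u2^2)*(w1^2+w2^2) ≤ U^2*W^2 :=
    mul_le_mul hu hw (by positivity) (by positivity)
  have hq : (U*W)^2 = U^2*W^2 := by ring
  linarith [sq_nonneg (u1*w2-w1*u2)]

lemma cross_bound (u1 u2 w1 w2 U W : ℝ) (hu : u1^2+u2^2 ≤ U^2) (hw : w1^2+w2^2 ≤ W^2)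
    (hU : 0 ≤ U) (hW : 0 ≤ W) : |u1*w2-w1*u2| ≤ U*W := by
  refine abs_le_of_sq _ _ (by positivity) ?_
  have hid : (u1*w1+u2*w2)^2 + (u1*w2-w1*u2)^2 = (u1^2+u2^2)*(w1^2+w2^2) := by ring
  have hm : (u1^2+u2^2)*(w1^2+w2^2) ≤ U^2*W^2 :=
    mul_le_mul hu hw (by positivity) (by positivity)
  have hq : (U*W)^2 = U^2*W^2 := by ring
  linarith [sq_nonneg (u1*w1+u2*w2)]

lemma two_quarter_pow : ((2:ℝ) ^ ((1:ℝ)/4)) ^ 4 = 2 := by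
  rw [← Real.rpow_natCast ((2:ℝ) ^ ((1:ℝ)/4)) 4, ← Real.rpow_mul (by norm_num)]
  norm_num

lemma quasi3 (a b c : H) :
    KN (Hmul (Hmul a b) c) ≤ (2:ℝ) ^ ((1:ℝ)/4) * (KN a + KN b + KN c) := by
  set A := KN a with hA
  set B := KN b with hB
  set C := KN c with hC
  have hA0 := KN_nonneg' a
  have hB0 := KN_nonneg' b
  have hC0 := KN_nonneg' c
  have ha1 := KN_horiz_sq a
  have hb1 := KN_horiz_sq b
  have hc1 := KN_horiz_sq c
  have ha2 := KN_vert_abs a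
  have hb2 := KN_vert_abs b
  have hc2 := KN_vert_abs c
  set S := A + B + C with hS
  have hS0 : 0 ≤ S := by positivity
  have hdab := abs_le.mp (dot_bound a.1 a.2.1 b.1 b.2.1 A B ha1 hb1 hA0 hB0)
  have hdac := abs_le.mp (dot_bound a.1 a.2.1 c.1 c.2.1 A C ha1 hc1 hA0 hC0)
  have hdbc := abs_le.mp (dot_bound b.1 b.2.1 c.1 c.2.1 B C hb1 hc1 hB0 hC0)
  have hcab := abs_le.mp (cross_bound a.1 a.2.1 b.1 b.2.1 A B ha1 hb1 hA0 hB0)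
  have hcac := abs_le.mp (cross_bound a.1 a.2.1 c.1 c.2.1 A C ha1 hc1 hA0 hC0)
  have hcbc := abs_le.mp (cross_bound b.1 b.2.1 c.1 c.2.1 B C hb1 hc1 hB0 hC0)
  have ha2' := abs_le.mp ha2
  have hb2' := abs_le.mp hb2
  have hc2' := abs_le.mp hc2
  have hS2 : S^2 = A^2+B^2+C^2+2*(A*B)+2*(A*C)+2*(B*C) := by ring
  have hH : ((Hmul (Hmul a b) c).1)^2 + ((Hmul (Hmul a b) c).2.1)^2 ≤ S^2 := by
    simp only [Hmul]
    rw [hS2]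
    linarith [hdab.2, hdac.2, hdbc.2, ha1, hb1, hc1]
  have hT : |(Hmul (Hmul a b) c).2.2| ≤ S^2 := by
    simp only [Hmul]
    rw [abs_le, hS2]
    constructor
    · linarith [hcab.1, hcac.1, hcbc.1, ha2'.1, hb2'.1, hc2'.1]
    · linarith [hcab.2, hcac.2, hcbc.2, ha2'.2, hb2'.2, hc2'.2]
  have h4 : (KN (Hmul (Hmul a b) c))^4 ≤ 2 * S^4 := by
    rw [KN_pow4]
    have h1 : (((Hmul (Hmul a b) c).1)^2 + ((Hmul (Hmul a b) c).2.1)^2)^2 ≤ (S^2)^2 := by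
      have h0 : 0 ≤ ((Hmul (Hmul a b) c).1)^2 + ((Hmul (Hmul a b) c).2.1)^2 := by positivity
      exact pow_le_pow_left₀ h0 hH 2
    have h2 : ((Hmul (Hmul a b) c).2.2)^2 ≤ (S^2)^2 := by
      have := pow_le_pow_left₀ (abs_nonneg _) hT 2
      simpa [sq_abs] using this
    have hq : (S^2)^2 = S^4 := by ring
    linarith
  refine le_of_pow_le_pow_left₀ (n := 4) (by norm_num) (by positivity) ?_
  calc (KN (Hmul (Hmul a b) c))^4 ≤ 2 * S^4 := h4
    _ = ((2:ℝ) ^ ((1:ℝ)/4))^4 * S^4 := by rw [two_quarter_pow]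
    _ = ((2:ℝ) ^ ((1:ℝ)/4) * S)^4 := by ring

lemma Hext (a b : H) (h1 : a.1 = b.1) (h2 : a.2.1 = b.2.1) (h3 : a.2.2 = b.2.2) : a = b := by
  obtain ⟨x, y, z⟩ := a; obtain ⟨x', y', z'⟩ := b
  simp_all

lemma quasi2 (a b : H) : KN (Hmul a b) ≤ (2:ℝ) ^ ((1:ℝ)/4) * (KN a + KN b) := by
  have h := quasi3 a b ((0,0,0) : H)
  have h0 : Hmul (Hmul a b) ((0,0,0):H) = Hmul a b := by
    apply Hext <;> simp [Hmul]
  have hK0 : KN ((0,0,0):H) = 0 := by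
    rw [KN]; norm_num
  rw [h0, hK0] at h
  simpa using h

lemma chain3 (a b c d : H) :
    Hmul (Hmul (Hmul (Hinv a) b) (Hmul (Hinv b) c)) (Hmul (Hinv c) d) = Hmul (Hinv a) d := by
  apply Hext <;> simp [Hmul, Hinv] <;> ring

lemma chain2 (a b c : H) :
    Hmul (Hmul (Hinv a) b) (Hmul (Hinv b) c) = Hmul (Hinv a) c := by
  apply Hext <;> simp [Hmul, Hinv] <;> ring

lemma Hmul_cancel (a b : H) : Hmul a (Hmul (Hinv a) b) = b := by
  apply Hext <;> simp [Hmul, Hinv] <;> ring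

lemma left_inv_mul (g a b : H) :
    Hmul (Hinv (Hmul g a)) (Hmul g b) = Hmul (Hinv a) b := by
  apply Hext <;> simp [Hmul, Hinv] <;> ring

lemma KN_neg (a : H) : KN (Hinv a) = KN a := by
  simp [KN, Hinv]

lemma Hd_symm (a b : H) : Hd a b = Hd b a := by
  have h : Hmul (Hinv a) b = Hinv (Hmul (Hinv b) a) := by
    apply Hext <;> simp [Hmul, Hinv] <;> ring
  rw [Hd, h, KN_neg, Hd]

lemma Hd_self (a : H) : Hd a a = 0 := by
  have h : Hmul (Hinv a) a = ((0:ℝ), (0:ℝ), (0:ℝ)) := by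
    apply Hext <;> simp [Hmul, Hinv]
  rw [Hd, h, KN]
  norm_num

lemma Hd_nonneg (a b : H) : 0 ≤ Hd a b := KN_nonneg' _

lemma KN_horizpt (u1 u2 : ℝ) : KN ((u1, u2, 0) : H) = Real.sqrt (u1^2 + u2^2) := by
  have h : (0:ℝ) ≤ u1^2+u2^2 := by positivity
  rw [KN]
  simp only
  rw [show ((u1^2+u2^2)^2 + (0:ℝ)^2) = (u1^2+u2^2)^2 by ring]
  rw [← Real.rpow_natCast (u1^2+u2^2) 2, ← Real.rpow_mul h]
  rw [Real.sqrt_eq_rpow]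
  norm_num

lemma exists_close_line (pt g : H) (v : ℝ × ℝ) (c ε : ℝ) (hε : 0 < ε)
    (h : distSet pt (horizLine g v) ≤ c) :
    ∃ t : ℝ, Hd pt (Hmul g (t * v.1, t * v.2, 0)) ≤ c + ε := by
  by_contra hcon
  push_neg at hcon
  have hne : {s : ℝ | ∃ q ∈ horizLine g v, s = Hd pt q}.Nonempty := by
    refine ⟨Hd pt (Hmul g (0 * v.1, 0 * v.2, 0)), ⟨Hmul g (0 * v.1, 0 * v.2, 0), ⟨0, rfl⟩, rfl⟩⟩
  have hlb : ∀ s ∈ {s : ℝ | ∃ q ∈ horizLine g v, s = Hd pt q}, c + ε ≤ s := by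
    rintro s ⟨q, ⟨t, rfl⟩, rfl⟩
    exact (hcon t).le
  have := le_csInf hne hlb
  rw [← distSet] at this
  linarith

lemma final_arith (α r J S ci cj M : ℝ) (hr : 0 < r) (hα1 : 1 ≤ α) (hα2 : α ≤ 6/5)
    (hJ0 : 0 ≤ J) (hS0 : 0 ≤ S) (hci0 : 0 ≤ ci) (hcj0 : 0 ≤ cj) (hM0 : 0 ≤ M)
    (hA1 : r < α * (J + S)) (hS : S ≤ r/50) (hA2 : J ≤ α * (ci + M + cj))
    (hci : ci ≤ 3*r/100) (hcj : cj ≤ 3*r/100) : (2*r)/4 < M - ci - cj := by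
  have hα0 : (0:ℝ) ≤ α := by linarith
  have hαsq : α^2 ≤ 36/25 := by nlinarith
  have hαJ : α * J ≤ α^2 * (ci + M + cj) := by nlinarith
  have hαS : α * S ≤ (6/5) * (r/50) := by nlinarith
  have h1 : r < α^2 * (ci + M + cj) + (6/5)*(r/50) := by nlinarith
  have h2 : α^2 * (ci + M + cj) ≤ (36/25) * (ci + M + cj) := by nlinarith
  linarith

set_option maxHeartbeats 1000000 in
/-- Flat exit lemma. -/
theorem flat_exit (δ : ℝ) (hδ0 : 0 < δ) (hδ : δ < 1 / 100)
    (x : H) (r : ℝ) (hr : 0 < r) (g : H) (v : ℝ × ℝ) (hv : v ≠ 0)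
    (N : ℕ) (hN : 1 ≤ N) (p : ℕ → H)
    (hstart : p 1 = x)
    (hexit : Hd x (p N) > r)
    (hchain : ∀ i, 1 ≤ i → i < N → Hd (p i) (p (i + 1)) < δ * (2 * r))
    (hclose : ∀ i, 1 ≤ i → i ≤ N → Hd x (p i) ≤ r →
      distSet (p i) (horizLine g v) ≤ (2 * r) / 100) :
    ∃ i j, 1 ≤ i ∧ i ≤ N ∧ 1 ≤ j ∧ j ≤ N ∧ Hd x (p i) ≤ r ∧ Hd x (p j) ≤ r ∧
      |PL g v (p i) - PL g v (p j)| > (2 * r) / 4 := by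
  classical
  set α : ℝ := (2:ℝ) ^ ((1:ℝ)/4) with hαdef
  have hα4 : α ^ 4 = 2 := two_quarter_pow
  have hα0 : (0:ℝ) ≤ α := by positivity
  have hα1 : 1 ≤ α := by
    refine le_of_pow_le_pow_left₀ (n := 4) (by norm_num) hα0 ?_
    rw [hα4]; norm_num
  have hα2 : α ≤ 6/5 := by
    refine le_of_pow_le_pow_left₀ (n := 4) (by norm_num) (by norm_num) ?_
    rw [hα4]; norm_num
  -- positivity of the direction
  have hvv : 0 < v.1^2 + v.2^2 := by
    rcases lt_or_eq_of_le (by positivity : (0:ℝ) ≤ v.1^2+v.2^2) with h | h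
    · exact h
    · exfalso
      apply hv
      have h1 : v.1 = 0 := by nlinarith [sq_nonneg v.1, sq_nonneg v.2]
      have h2 : v.2 = 0 := by nlinarith [sq_nonneg v.1, sq_nonneg v.2]
      exact Prod.ext h1 h2
  set nv : ℝ := Real.sqrt (v.1^2 + v.2^2) with hnvdef
  have hnv : 0 < nv := Real.sqrt_pos.mpr hvv
  have hnvsq : nv ^ 2 = v.1^2 + v.2^2 := Real.sq_sqrt hvv.le
  -- find the first exit index k
  have hPN : 1 ≤ N ∧ N ≤ N ∧ r < Hd x (p N) := ⟨hN, le_refl _, hexit⟩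
  have hEx : ∃ n, 1 ≤ n ∧ n ≤ N ∧ r < Hd x (p n) := ⟨N, hPN⟩
  obtain ⟨k, hk1, hkN, hkr, hmin⟩ :
      ∃ k, 1 ≤ k ∧ k ≤ N ∧ r < Hd x (p k) ∧
        ∀ m < k, ¬(1 ≤ m ∧ m ≤ N ∧ r < Hd x (p m)) :=
    ⟨Nat.find hEx, (Nat.find_spec hEx).1, (Nat.find_spec hEx).2.1, (Nat.find_spec hEx).2.2,
      fun m hm => Nat.find_min hEx hm⟩
  have hk2 : 2 ≤ k := by
    by_contra h
    have hk1' : k = 1 := by omega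
    rw [hk1', hstart, Hd_self] at hkr
    linarith
  obtain ⟨j, hjdef⟩ : ∃ j, j = k - 1 := ⟨k - 1, rfl⟩
  have hjk : j < k := by omega
  have hj1 : 1 ≤ j := by omega
  have hjN : j ≤ N := by omega
  have hjsucc : j + 1 = k := by omega
  have hPj : ¬(1 ≤ j ∧ j ≤ N ∧ r < Hd x (p j)) := hmin j hjk
  push_neg at hPj
  have hjr : Hd x (p j) ≤ r := hPj hj1 hjN
  have hjN' : j < N := by omega
  have hstep : Hd (p j) (p k) < δ * (2 * r) := by
    have := hchain j hj1 hjN'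
    rwa [hjsucc] at this
  -- quasi triangle: r < α * (J + S)
  have hA1 : r < α * (Hd x (p j) + Hd (p j) (p k)) := by
    have hid : Hmul (Hmul (Hinv x) (p j)) (Hmul (Hinv (p j)) (p k)) = Hmul (Hinv x) (p k) :=
      chain2 x (p j) (p k)
    have hq := quasi2 (Hmul (Hinv x) (p j)) (Hmul (Hinv (p j)) (p k))
    rw [hid] at hq
    calc r < Hd x (p k) := hkr
      _ = KN (Hmul (Hinv x) (p k)) := rfl
      _ ≤ α * (KN (Hmul (Hinv x) (p j)) + KN (Hmul (Hinv (p j)) (p k))) := hq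
      _ = α * (Hd x (p j) + Hd (p j) (p k)) := rfl
  -- approximate projections onto the line
  have hx_in : Hd x (p 1) ≤ r := by rw [hstart, Hd_self]; exact hr.le
  have hclose1 : distSet x (horizLine g v) ≤ (2*r)/100 := by
    have := hclose 1 (le_refl 1) hN hx_in
    rwa [hstart] at this
  have hclosej : distSet (p j) (horizLine g v) ≤ (2*r)/100 := hclose j hj1 hjN hjr
  obtain ⟨ti, hti⟩ := exists_close_line x g v ((2*r)/100) (r/100) (by positivity) hclose1
  obtain ⟨tj, htj⟩ := exists_close_line (p j) g v ((2*r)/100) (r/100) (by positivity) hclosej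
  set qi : H := Hmul g (ti * v.1, ti * v.2, 0) with hqi
  set qj : H := Hmul g (tj * v.1, tj * v.2, 0) with hqj
  have hci : Hd x qi ≤ 3*r/100 := by rw [hqi]; linarith [hti]
  have hcj : Hd (p j) qj ≤ 3*r/100 := by rw [hqj]; linarith [htj]
  set M : ℝ := Hd qi qj with hMdef
  have hM : M = |tj - ti| * nv := by
    have hid : Hmul (Hinv ((ti*v.1, ti*v.2, 0):H)) ((tj*v.1, tj*v.2, 0):H)
        = (((tj-ti)*v.1, (tj-ti)*v.2, 0):H) := by
      apply Hext <;> simp [Hmul, Hinv] <;> ring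
    have h1 : M = KN ((((tj-ti)*v.1, (tj-ti)*v.2, 0)):H) := by
      rw [hMdef, Hd, hqi, hqj, left_inv_mul, hid]
    rw [h1, KN_horizpt]
    rw [show ((tj-ti)*v.1)^2 + ((tj-ti)*v.2)^2 = (tj-ti)^2 * (v.1^2+v.2^2) by ring]
    rw [Real.sqrt_mul (sq_nonneg _), Real.sqrt_sq_eq_abs]
  -- second quasi triangle: J ≤ α * (ci + M + cj)
  have hA2 : Hd x (p j) ≤ α * (Hd x qi + M + Hd (p j) qj) := by
    have hid := chain3 x qi qj (p j)
    have hq := quasi3 (Hmul (Hinv x) qi) (Hmul (Hinv qi) qj) (Hmul (Hinv qj) (p j))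
    rw [hid] at hq
    have hsym : KN (Hmul (Hinv qj) (p j)) = Hd (p j) qj := (Hd_symm qj (p j)) ▸ rfl
    calc Hd x (p j) = KN (Hmul (Hinv x) (p j)) := rfl
      _ ≤ α * (KN (Hmul (Hinv x) qi) + KN (Hmul (Hinv qi) qj) + KN (Hmul (Hinv qj) (p j))) := hq
      _ = α * (Hd x qi + M + Hd (p j) qj) := by rw [hsym]; rfl
  -- express coordinates
  set wi : H := Hmul (Hinv qi) x with hwi
  set wj : H := Hmul (Hinv qj) (p j) with hwj
  have hKwi : KN wi = Hd x qi := by rw [hwi, ← Hd, Hd_symm]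
  have hKwj : KN wj = Hd (p j) qj := by rw [hwj, ← Hd, Hd_symm]
  have hxw : x = Hmul qi wi := (Hmul_cancel qi x).symm
  have hpjw : p j = Hmul qj wj := (Hmul_cancel qj (p j)).symm
  -- PL difference formula
  have hPL : PL g v x - PL g v (p j) =
      ((ti - tj) * (v.1^2 + v.2^2) + ((wi.1*v.1 + wi.2.1*v.2) - (wj.1*v.1 + wj.2.1*v.2))) / nv := by
    rw [PL, PL, div_sub_div_same, ← hnvdef]
    congr 1
    rw [hxw, hpjw, hqi, hqj]
    simp only [Hmul]
    ring
  -- bound the dot products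
  have hdot_i : |wi.1*v.1 + wi.2.1*v.2| ≤ KN wi * nv := by
    refine dot_bound wi.1 wi.2.1 v.1 v.2 (KN wi) nv (KN_horiz_sq wi) ?_ (KN_nonneg' wi) hnv.le
    rw [hnvsq]
  have hdot_j : |wj.1*v.1 + wj.2.1*v.2| ≤ KN wj * nv := by
    refine dot_bound wj.1 wj.2.1 v.1 v.2 (KN wj) nv (KN_horiz_sq wj) ?_ (KN_nonneg' wj) hnv.le
    rw [hnvsq]
  -- key lower bound on PL difference
  have hkey : M - Hd x qi - Hd (p j) qj ≤ |PL g v x - PL g v (p j)| := by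
    rw [hPL, abs_div, abs_of_pos hnv]
    rw [le_div_iff₀ hnv]
    have htri : |(ti - tj) * (v.1^2+v.2^2)|
        - |(wi.1*v.1 + wi.2.1*v.2) - (wj.1*v.1 + wj.2.1*v.2)|
        ≤ |(ti - tj) * (v.1^2 + v.2^2) + ((wi.1*v.1 + wi.2.1*v.2) - (wj.1*v.1 + wj.2.1*v.2))| := by
      have h := abs_add_le ((ti - tj) * (v.1^2 + v.2^2) + ((wi.1*v.1 + wi.2.1*v.2) - (wj.1*v.1 + wj.2.1*v.2)))
        (-((wi.1*v.1 + wi.2.1*v.2) - (wj.1*v.1 + wj.2.1*v.2)))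
      rw [abs_neg] at h
      have h2 : (ti - tj) * (v.1^2 + v.2^2) + ((wi.1*v.1 + wi.2.1*v.2) - (wj.1*v.1 + wj.2.1*v.2))
          + -((wi.1*v.1 + wi.2.1*v.2) - (wj.1*v.1 + wj.2.1*v.2)) = (ti - tj) * (v.1^2+v.2^2) := by ring
      rw [h2] at h
      linarith
    have hsubtri : |(wi.1*v.1 + wi.2.1*v.2) - (wj.1*v.1 + wj.2.1*v.2)|
        ≤ |wi.1*v.1 + wi.2.1*v.2| + |wj.1*v.1 + wj.2.1*v.2| := abs_sub _ _
    have hprod : |(ti - tj) * (v.1^2+v.2^2)| = |tj - ti| * nv * nv := by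
      rw [abs_mul, abs_of_pos hvv, ← hnvsq, abs_sub_comm]
      ring
    have hMeq : M * nv = |tj - ti| * nv * nv := by rw [hM]
    calc (M - Hd x qi - Hd (p j) qj) * nv
        = M * nv - Hd x qi * nv - Hd (p j) qj * nv := by ring
      _ = |tj - ti| * nv * nv - KN wi * nv - KN wj * nv := by rw [hMeq, hKwi, hKwj]
      _ ≤ |(ti - tj) * (v.1^2+v.2^2)| - |wi.1*v.1 + wi.2.1*v.2| - |wj.1*v.1 + wj.2.1*v.2| := by
          rw [hprod]; linarith [hdot_i, hdot_j]
      _ ≤ |(ti - tj) * (v.1^2 + v.2^2) + ((wi.1*v.1 + wi.2.1*v.2) - (wj.1*v.1 + wj.2.1*v.2))| := by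
          linarith [htri, hsubtri]
  -- arithmetic conclusion
  have hS : Hd (p j) (p k) ≤ r/50 := by nlinarith [hstep]
  have hci0 : 0 ≤ Hd x qi := Hd_nonneg _ _
  have hcj0 : 0 ≤ Hd (p j) qj := Hd_nonneg _ _
  have hM0 : 0 ≤ M := Hd_nonneg _ _
  have hJ0 : 0 ≤ Hd x (p j) := Hd_nonneg _ _
  have hS0 : 0 ≤ Hd (p j) (p k) := Hd_nonneg _ _
  have hfinal : (2*r)/4 < M - Hd x qi - Hd (p j) qj :=
    final_arith α r (Hd x (p j)) (Hd (p j) (p k)) (Hd x qi) (Hd (p j) qj) M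
      hr hα1 hα2 hJ0 hS0 hci0 hcj0 hM0 hA1 hS hA2 hci hcj
  refine ⟨1, j, le_refl 1, hN, hj1, hjN, hx_in, hjr, ?_⟩
  rw [hstart]
  linarith [hkey, hfinal]
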